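/- arXiv:2011.09049 — 6 statements merged into one kernel-verified Lean document; each statement's English description precedes it below -/
import Mathlib

section
/- For the two-player cooperative game v on {1,2} defined by v(∅)=0, v({1})=0, v({2})=1, v({1,2})=1, with permission structure S(1)=∅, S(2)={1} (so the projection v' satisfies v'(E)=v(α(E)) where α(E) is the largest subset F⊆E with every member's superiors in F), the Shapley values of the projection v' are φ₁(v')=φ₂(v')=1/2, and there exist no positive weights (ω₁,ω₂) such that the weighted Shapley value of the original game v equals (1/2,1/2); i.e., φ^ω₁(v)=1/2 and φ^ω₂(v)=1/2 have no solution with ω₁,ω₂>0. -/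
open Finset
open scoped Classical

/-- Harsanyi dividend of coalition `E` in game `v`. -/
noncomputable def dividend {α : Type*} [DecidableEq α] (v : Finset α → ℝ) (E : Finset α) : ℝ :=
  ∑ F ∈ E.powerset, (-1 : ℝ) ^ (E.card - F.card) * v F

/-- Weighted Shapley value with weights `ω`. -/
noncomputable def wShapley {α : Type*} [Fintype α] [DecidableEq α]
    (ω : α → ℝ) (v : Finset α → ℝ) (i : α) : ℝ :=
  ∑ E ∈ (univ : Finset α).powerset,
    if i ∈ E then dividend v E * ω i / (∑ j ∈ E, ω j) else 0

/-- Ordinary Shapley value. -/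
noncomputable def shapley {α : Type*} [Fintype α] [DecidableEq α]
    (v : Finset α → ℝ) (i : α) : ℝ :=
  wShapley (fun _ => 1) v i

/-- `E` is autonomous in the permission structure `S`. -/
def autonomous {α : Type*} (S : α → Finset α) (E : Finset α) : Prop :=
  ∀ i ∈ E, S i ⊆ E

/-- The autonomous part `α(E)`: the union of all autonomous subsets of `E`. -/
noncomputable def autPart {α : Type*} [DecidableEq α] (S : α → Finset α) (E : Finset α) :
    Finset α :=
  (E.powerset.filter (autonomous S)).sup id

/-- The projection of `v` on the permission structure `S`. -/
noncomputable def proj {α : Type*} [DecidableEq α] (S : α → Finset α) (v : Finset α → ℝ)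
    (E : Finset α) : ℝ :=
  v (autPart S E)

lemma psum (f : Finset (Fin 2) → ℝ) :
    ∑ E ∈ (univ : Finset (Fin 2)).powerset, f E = f ∅ + f {0} + f {1} + f {0,1} := by
  have h : (univ : Finset (Fin 2)).powerset = {∅, {0}, {1}, ({0,1} : Finset (Fin 2))} := by decide
  rw [h, Finset.sum_insert (by decide), Finset.sum_insert (by decide),
      Finset.sum_insert (by decide), Finset.sum_singleton]
  ring

lemma psum1 (f : Finset (Fin 2) → ℝ) (E : Finset (Fin 2)) (hE : E = {1}) :
    ∑ F ∈ E.powerset, f F = f ∅ + f {1} := by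
  subst hE
  have h : ({1} : Finset (Fin 2)).powerset = {∅, ({1} : Finset (Fin 2))} := by decide
  rw [h, Finset.sum_insert (by decide), Finset.sum_singleton]

lemma psum0 (f : Finset (Fin 2) → ℝ) (E : Finset (Fin 2)) (hE : E = {0}) :
    ∑ F ∈ E.powerset, f F = f ∅ + f {0} := by
  subst hE
  have h : ({0} : Finset (Fin 2)).powerset = {∅, ({0} : Finset (Fin 2))} := by decide
  rw [h, Finset.sum_insert (by decide), Finset.sum_singleton]

lemma psum2 (f : Finset (Fin 2) → ℝ) (E : Finset (Fin 2)) (hE : E = {0,1}) :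
    ∑ F ∈ E.powerset, f F = f ∅ + f {0} + f {1} + f {0,1} := by
  subst hE
  have h : ({0,1} : Finset (Fin 2)).powerset = {∅, {0}, {1}, ({0,1} : Finset (Fin 2))} := by
    decide
  rw [h, Finset.sum_insert (by decide), Finset.sum_insert (by decide),
      Finset.sum_insert (by decide), Finset.sum_singleton]
  ring

lemma autPart_eq {S : Fin 2 → Finset (Fin 2)} (E A : Finset (Fin 2))
    (hA : A ⊆ E) (haut : autonomous S A)
    (hmax : ∀ F, F ⊆ E → autonomous S F → F ⊆ A) : autPart S E = A := by
  apply le_antisymm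
  · apply Finset.sup_le
    intro F hF
    rw [Finset.mem_filter, Finset.mem_powerset] at hF
    exact hmax F hF.1 hF.2
  · exact Finset.le_sup (f := id)
      (by rw [Finset.mem_filter, Finset.mem_powerset]; exact ⟨hA, haut⟩)

theorem stmt0 (v : Finset (Fin 2) → ℝ)
    (hv : v = fun E => if (1 : Fin 2) ∈ E then 1 else 0)
    (S : Fin 2 → Finset (Fin 2)) (hS : S = fun i => if i = 1 then {0} else ∅) :
    shapley (proj S v) 0 = 1 / 2 ∧ shapley (proj S v) 1 = 1 / 2 ∧
      ¬ ∃ ω : Fin 2 → ℝ, (∀ i, 0 < ω i) ∧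
          wShapley ω v 0 = 1 / 2 ∧ wShapley ω v 1 = 1 / 2 := by
  subst hv hS
  set S : Fin 2 → Finset (Fin 2) := fun i => if i = 1 then {0} else ∅ with hS
  set v : Finset (Fin 2) → ℝ := fun E => if (1 : Fin 2) ∈ E then 1 else 0 with hv
  -- autPart computations
  have a0 : autPart S ∅ = ∅ :=
    autPart_eq _ _ (le_refl _) (by intro i hi; simp at hi) (fun F hF _ => hF)
  have a1 : autPart S {0} = {0} := by
    apply autPart_eq _ _ (le_refl _) _ (fun F hF _ => hF)
    intro i hi
    simp only [Finset.mem_singleton] at hi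
    subst hi
    simp [hS]
  have a2 : autPart S {1} = ∅ := by
    apply autPart_eq _ _ (by simp) (by intro i hi; simp at hi)
    intro F hF haut i hi
    have h1 : i = 1 := by have := hF hi; simpa using this
    subst h1
    have h0 : (0 : Fin 2) ∈ F := haut 1 hi (by simp [hS] : (0 : Fin 2) ∈ S 1)
    have : (0 : Fin 2) = 1 := by simpa using hF h0
    exact absurd this (by decide)
  have a3 : autPart S {0,1} = {0,1} := by
    apply autPart_eq _ _ (le_refl _) _ (fun F hF _ => hF)
    intro i hi
    fin_cases i <;> simp [hS]
  -- projected game values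
  have p0 : proj S v ∅ = 0 := by rw [proj, a0]; simp [hv]
  have p1 : proj S v {0} = 0 := by rw [proj, a1]; simp [hv]
  have p2 : proj S v {1} = 0 := by rw [proj, a2]; simp [hv]
  have p3 : proj S v {0,1} = 1 := by rw [proj, a3]; simp [hv]
  -- dividends of proj
  have d0 : dividend (proj S v) ∅ = 0 := by
    rw [dividend]; simp [p0]
  have d1 : dividend (proj S v) {0} = 0 := by
    rw [dividend, psum0 _ _ rfl, p0, p1]; ring
  have d2 : dividend (proj S v) {1} = 0 := by
    rw [dividend, psum1 _ _ rfl, p0, p2]; ring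
  have d3 : dividend (proj S v) {0,1} = 1 := by
    rw [dividend, psum2 _ _ rfl, p0, p1, p2, p3]
    have hc : ({0,1} : Finset (Fin 2)).card = 2 := by decide
    have hc0 : ({0} : Finset (Fin 2)).card = 1 := by decide
    have hc1 : ({1} : Finset (Fin 2)).card = 1 := by decide
    have hce : (∅ : Finset (Fin 2)).card = 0 := by decide
    rw [hc, hc0, hc1, hce]
    norm_num
  -- dividends of v
  have v0 : v ∅ = 0 := by simp [hv]
  have v1 : v {0} = 0 := by simp [hv]
  have v2 : v {1} = 1 := by simp [hv]
  have v3 : v {0,1} = 1 := by simp [hv]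
  have e0 : dividend v ∅ = 0 := by rw [dividend]; simp [v0]
  have e1 : dividend v {0} = 0 := by rw [dividend, psum0 _ _ rfl, v0, v1]; ring
  have e2 : dividend v {1} = 1 := by
    rw [dividend, psum1 _ _ rfl, v0, v2]
    have hc1 : ({1} : Finset (Fin 2)).card = 1 := by decide
    have hce : (∅ : Finset (Fin 2)).card = 0 := by decide
    rw [hc1, hce]; norm_num
  have e3 : dividend v {0,1} = 0 := by
    rw [dividend, psum2 _ _ rfl, v0, v1, v2, v3]
    have hc : ({0,1} : Finset (Fin 2)).card = 2 := by decide
    have hc0 : ({0} : Finset (Fin 2)).card = 1 := by decide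
    have hc1 : ({1} : Finset (Fin 2)).card = 1 := by decide
    have hce : (∅ : Finset (Fin 2)).card = 0 := by decide
    rw [hc, hc0, hc1, hce]; norm_num
  -- membership facts
  have m00 : (0 : Fin 2) ∉ (∅ : Finset (Fin 2)) := by decide
  have m01 : (0 : Fin 2) ∈ ({0} : Finset (Fin 2)) := by decide
  have m02 : (0 : Fin 2) ∉ ({1} : Finset (Fin 2)) := by decide
  have m03 : (0 : Fin 2) ∈ ({0,1} : Finset (Fin 2)) := by decide
  have m10 : (1 : Fin 2) ∉ (∅ : Finset (Fin 2)) := by decide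
  have m11 : (1 : Fin 2) ∉ ({0} : Finset (Fin 2)) := by decide
  have m12 : (1 : Fin 2) ∈ ({1} : Finset (Fin 2)) := by decide
  have m13 : (1 : Fin 2) ∈ ({0,1} : Finset (Fin 2)) := by decide
  have hsum2 : (∑ j ∈ ({0,1} : Finset (Fin 2)), (1:ℝ)) = 2 := by
    rw [Finset.sum_const]
    have : ({0,1} : Finset (Fin 2)).card = 2 := by decide
    rw [this]; norm_num
  refine ⟨?_, ?_, ?_⟩
  · rw [shapley, wShapley, psum, if_neg m00, if_pos m01, if_neg m02, if_pos m03,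
      d1, d3, hsum2]
    norm_num
  · rw [shapley, wShapley, psum, if_neg m10, if_neg m11, if_pos m12, if_pos m13,
      d2, d3, hsum2]
    norm_num
  · rintro ⟨ω, hpos, h0, _⟩
    rw [wShapley, psum, if_neg m00, if_pos m01, if_neg m02, if_pos m03, e1, e3] at h0
    norm_num at h0
end

section
/- Let v:2^N→ℝ be a super-additive cooperative game (v(E)+v(F)≤v(E∪F) whenever E∩F=∅) that is also monotone, with permission restriction P_ϱ(v)(E)=v(α(E)) for a mixed permission structure ϱ. Then P_ϱ(v) is super-additive. -/
open Finset

/-- The autonomous part of `E` relative to a family `A` of autonomous coalitions: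
the union of all members of `A` contained in `E`. -/
def autPartA {α : Type*} [DecidableEq α] (A : Finset (Finset α)) (E : Finset α) : Finset α :=
  (E.powerset.filter (· ∈ A)).sup id

lemma autPartA_subset {α : Type*} [DecidableEq α] (A : Finset (Finset α)) (E : Finset α) :
    autPartA A E ⊆ E := by
  show _ ≤ _
  apply Finset.sup_le
  intro s hs
  simp only [Finset.mem_filter, Finset.mem_powerset] at hs
  exact hs.1

lemma autPartA_mem {α : Type*} [DecidableEq α] (A : Finset (Finset α))
    (hempty : ∅ ∈ A) (hunion : ∀ E ∈ A, ∀ F ∈ A, E ∪ F ∈ A) (E : Finset α) :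
    autPartA A E ∈ A := by
  apply Finset.sup_induction hempty
  · intro a ha b hb; exact hunion a ha b hb
  · intro s hs
    simp only [Finset.mem_filter] at hs
    exact hs.2

lemma subset_autPartA {α : Type*} [DecidableEq α] (A : Finset (Finset α))
    {S E : Finset α} (hS : S ∈ A) (hSE : S ⊆ E) : S ⊆ autPartA A E := by
  show _ ≤ _
  exact Finset.le_sup (f := id) (by simp [Finset.mem_filter, Finset.mem_powerset, hS, hSE])

theorem stmt6 {α : Type*} [Fintype α] [DecidableEq α]
    (A : Finset (Finset α)) (hempty : ∅ ∈ A) (huniv : univ ∈ A)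
    (hunion : ∀ E ∈ A, ∀ F ∈ A, E ∪ F ∈ A)
    (v : Finset α → ℝ) (hv0 : v ∅ = 0)
    (hmono : ∀ E F : Finset α, E ⊆ F → v E ≤ v F)
    (hsuper : ∀ E F : Finset α, E ∩ F = ∅ → v E + v F ≤ v (E ∪ F))
    (P : Finset α → ℝ) (hP : P = fun E => v (autPartA A E)) :
    ∀ E F : Finset α, E ∩ F = ∅ → P E + P F ≤ P (E ∪ F) := by
  subst hP
  intro E F hEF
  have haE := autPartA_subset A E
  have haF := autPartA_subset A F
  have hdisj : autPartA A E ∩ autPartA A F = ∅ := by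
    exact Finset.subset_empty.1 (hEF ▸ Finset.inter_subset_inter haE haF)
  have h1 := hsuper _ _ hdisj
  have h2 : autPartA A E ∪ autPartA A F ⊆ autPartA A (E ∪ F) :=
    subset_autPartA A
      (hunion _ (autPartA_mem A hempty hunion E) _ (autPartA_mem A hempty hunion F))
      (Finset.union_subset_union haE haF)
  exact h1.trans (hmono _ _ h2)
end

section
/- Let v be an additive game on a rooted tree with root r (depth 0): v(E)=∑_{i∈E} v_i with all v_i≥0. Under the tree permission structure with projection v'(E)=v(α(E)), the Shapley value of player i in v' equals φ'_i = ∑_{k∈T_i} v_k/(d_k+1), where T_i is the set of players in the subtree rooted at i and d_k is the depth of k. -/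
open Finset
open scoped Classical

/-- unanimity game on T -/
noncomputable def uGame {α : Type*} [DecidableEq α] (T : Finset α) : Finset α → ℝ :=
  fun E => if T ⊆ E then 1 else 0

lemma sum_pow_neg_one_real {α : Type*} [DecidableEq α] (x : Finset α) :
    (∑ m ∈ x.powerset, (-1 : ℝ) ^ m.card) = if x = ∅ then 1 else 0 := by
  have h := Finset.sum_powerset_neg_one_pow_card (x := x)
  have : ((∑ m ∈ x.powerset, (-1 : ℤ) ^ m.card : ℤ) : ℝ)
      = ∑ m ∈ x.powerset, (-1 : ℝ) ^ m.card := by push_cast; rfl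
  rw [← this, h]
  split <;> norm_num

lemma dividend_uGame {α : Type*} [DecidableEq α] (T E : Finset α) :
    dividend (uGame T) E = if E = T then 1 else 0 := by
  unfold dividend uGame
  by_cases hTE : T ⊆ E
  · -- reindex F ↦ E \ F
    have hbij : ∑ F ∈ E.powerset, (-1 : ℝ) ^ (E.card - F.card) * (if T ⊆ F then 1 else 0)
        = ∑ F ∈ E.powerset, (-1 : ℝ) ^ (E.card - (E \ F).card) * (if T ⊆ E \ F then 1 else 0) := by
      refine Finset.sum_nbij' (fun F => E \ F) (fun F => E \ F) ?_ ?_ ?_ ?_ ?_ <;>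
        intro F hF
      · exact Finset.mem_powerset.2 Finset.sdiff_subset
      · exact Finset.mem_powerset.2 Finset.sdiff_subset
      · exact Finset.sdiff_sdiff_eq_self (Finset.mem_powerset.1 hF)
      · exact Finset.sdiff_sdiff_eq_self (Finset.mem_powerset.1 hF)
      · rw [Finset.sdiff_sdiff_eq_self (Finset.mem_powerset.1 hF)]
    rw [hbij]
    have hterm : ∀ F ∈ E.powerset,
        (-1 : ℝ) ^ (E.card - (E \ F).card) * (if T ⊆ E \ F then 1 else 0)
        = if F ∈ (E \ T).powerset then (-1 : ℝ) ^ F.card else 0 := by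
      intro F hF
      rw [Finset.mem_powerset] at hF
      have hc := Finset.card_le_card hF
      have hcard : E.card - (E \ F).card = F.card := by
        rw [Finset.card_sdiff_of_subset hF]
        omega
      rw [hcard]
      simp only [Finset.mem_powerset]
      have hiff : T ⊆ E \ F ↔ F ⊆ E \ T := by
        constructor
        · intro h x hx
          rw [Finset.mem_sdiff]
          refine ⟨hF hx, fun hxT => ?_⟩
          have := h hxT
          rw [Finset.mem_sdiff] at this
          exact this.2 hx
        · intro h x hx
          rw [Finset.mem_sdiff]
          refine ⟨hTE hx, fun hxF => ?_⟩
          have := h hxF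
          rw [Finset.mem_sdiff] at this
          exact this.2 hx
      split_ifs with h1 h2 h2
      · ring
      · exact absurd (hiff.1 h1) h2
      · exact absurd (hiff.2 h2) h1
      · ring
    rw [Finset.sum_congr rfl hterm]
    rw [Finset.sum_ite_mem, Finset.inter_comm,
      (Finset.inter_eq_left).2 (Finset.powerset_mono.2 Finset.sdiff_subset)]
    rw [sum_pow_neg_one_real]
    have : E \ T = ∅ ↔ E = T := by
      rw [Finset.sdiff_eq_empty_iff_subset]
      exact ⟨fun h => Finset.Subset.antisymm h hTE, fun h => h ▸ Finset.Subset.refl _⟩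
    simp [this]
  · have hne : E ≠ T := fun h => hTE (h ▸ Finset.Subset.refl _)
    rw [if_neg hne]
    apply Finset.sum_eq_zero
    intro F hF
    rw [Finset.mem_powerset] at hF
    rw [if_neg (fun h => hTE (h.trans hF))]
    ring

section Tree
variable {α : Type*} [Fintype α] [DecidableEq α]

noncomputable def pathF (p : α → α) (k : α) : Finset α :=
  univ.filter (fun j => ∃ m : ℕ, p^[m] k = j)

lemma mem_pathF (p : α → α) (k j : α) : j ∈ pathF p k ↔ ∃ m : ℕ, p^[m] k = j := by
  simp [pathF]

lemma self_mem_pathF (p : α → α) (k : α) : k ∈ pathF p k :=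
  (mem_pathF p k k).2 ⟨0, rfl⟩

lemma pathF_p_subset (p : α → α) (k : α) : pathF p (p k) ⊆ pathF p k := by
  intro j hj
  rw [mem_pathF] at *
  obtain ⟨m, hm⟩ := hj
  exact ⟨m + 1, by rw [Function.iterate_succ_apply]; exact hm⟩

variable {r : α} {p : α → α}

lemma pathF_root (hr : p r = r) : pathF p r = {r} := by
  ext j
  rw [mem_pathF, Finset.mem_singleton]
  constructor
  · rintro ⟨m, hm⟩
    rw [Function.iterate_fixed hr] at hm
    exact hm.symm
  · rintro rfl; exact ⟨0, rfl⟩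

lemma pathF_step (k : α) (hk : k ≠ r) : pathF p k = insert k (pathF p (p k)) := by
  ext j
  rw [Finset.mem_insert, mem_pathF, mem_pathF]
  constructor
  · rintro ⟨m, hm⟩
    cases m with
    | zero => exact Or.inl hm.symm
    | succ n => exact Or.inr ⟨n, by rw [← Function.iterate_succ_apply]; exact hm⟩
  · rintro (rfl | ⟨m, hm⟩)
    · exact ⟨0, rfl⟩
    · exact ⟨m + 1, by rw [Function.iterate_succ_apply]; exact hm⟩

lemma notMem_pathF_p (hr : p r = r) (hreach : ∀ i : α, ∃ k : ℕ, p^[k] i = r)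
    (k : α) (hk : k ≠ r) : k ∉ pathF p (p k) := by
  rw [mem_pathF]
  rintro ⟨m, hm⟩
  have hm1 : p^[m + 1] k = k := by rw [Function.iterate_succ_apply]; exact hm
  obtain ⟨n, hn⟩ := hreach k
  have hcyc : ∀ j : ℕ, p^[j * (m + 1)] k = k := by
    intro j
    induction j with
    | zero => simp
    | succ j ih =>
        have : (j + 1) * (m + 1) = (m + 1) + j * (m + 1) := by ring
        rw [this, Function.iterate_add_apply, ih, hm1]
  have hge : n ≤ n * (m + 1) := Nat.le_mul_of_pos_right n (Nat.succ_pos m)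
  have : p^[n * (m + 1)] k = r := by
    have hsplit : n * (m + 1) = (n * (m + 1) - n) + n := by omega
    rw [hsplit, Function.iterate_add_apply, hn, Function.iterate_fixed hr]
  exact hk (by rw [← hcyc n, this])

lemma card_pathF (hr : p r = r) (hreach : ∀ i : α, ∃ k : ℕ, p^[k] i = r)
    (d : α → ℕ) (hd0 : d r = 0) (hd : ∀ i : α, i ≠ r → d i = d (p i) + 1) :
    ∀ k : α, (pathF p k).card = d k + 1 := by
  have key : ∀ n : ℕ, ∀ k : α, p^[n] k = r → (pathF p k).card = d k + 1 := by
    intro n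
    induction n with
    | zero => intro k hk; rw [Function.iterate_zero_apply] at hk; subst hk; rw [pathF_root hr, hd0]; simp
    | succ n ih =>
        intro k hk
        by_cases hkr : k = r
        · subst hkr; rw [pathF_root hr, hd0]; simp
        · rw [pathF_step k hkr,
            Finset.card_insert_of_notMem (notMem_pathF_p hr hreach k hkr),
            ih (p k) (by rw [← Function.iterate_succ_apply]; exact hk), hd k hkr]
  intro k
  obtain ⟨n, hn⟩ := hreach k
  exact key n k hn
end Tree

section AutPart
variable {α : Type*} [Fintype α] [DecidableEq α] {r : α} {p : α → α}

lemma autPart_eq_s11 (hr : p r = r) (S : α → Finset α)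
    (hS : S = fun i => if i = r then ∅ else {p i}) (E : Finset α) :
    autPart S E = E.filter (fun k => pathF p k ⊆ E) := by
  set A := E.filter (fun k => pathF p k ⊆ E) with hA
  have hAsub : A ⊆ E := Finset.filter_subset _ _
  have hAaut : autonomous S A := by
    intro i hi
    rw [hA, Finset.mem_filter] at hi
    obtain ⟨hiE, hiP⟩ := hi
    subst hS
    by_cases hir : i = r
    · simp [hir]
    · simp only [if_neg hir, Finset.singleton_subset_iff, hA, Finset.mem_filter]
      refine ⟨hiP (pathF_p_subset p i (self_mem_pathF p (p i))), ?_⟩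
      exact fun x hx => hiP (pathF_p_subset p i hx)
  have h1 : A ≤ autPart S E := by
    apply Finset.le_sup (f := id)
    rw [Finset.mem_filter, Finset.mem_powerset]
    exact ⟨hAsub, hAaut⟩
  have h2 : autPart S E ≤ A := by
    apply Finset.sup_le
    intro F hF
    rw [Finset.mem_filter, Finset.mem_powerset] at hF
    obtain ⟨hFE, hFaut⟩ := hF
    intro k hk
    rw [hA, Finset.mem_filter]
    refine ⟨hFE hk, fun j hj => hFE ?_⟩
    rw [mem_pathF] at hj
    obtain ⟨m, hm⟩ := hj
    subst hm
    induction m with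
    | zero => exact hk
    | succ n ih =>
        rw [Function.iterate_succ_apply']
        by_cases h : p^[n] k = r
        · rw [h, hr]; rw [h] at ih; exact ih
        · have := hFaut _ ih
          rw [hS] at this
          simp only [if_neg h, Finset.singleton_subset_iff] at this
          exact this
  exact le_antisymm h2 h1

lemma proj_eq (hr : p r = r) (S : α → Finset α)
    (hS : S = fun i => if i = r then ∅ else {p i})
    (c : α → ℝ) (v : Finset α → ℝ) (hv : v = fun E => ∑ i ∈ E, c i) (E : Finset α) :
    proj S v E = ∑ k ∈ (univ : Finset α), c k * uGame (pathF p k) E := by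
  rw [proj, autPart_eq_s11 hr S hS, hv]
  simp only [uGame, mul_ite, mul_one, mul_zero]
  rw [← Finset.sum_filter]
  apply Finset.sum_congr _ (fun _ _ => rfl)
  ext k
  simp only [Finset.mem_filter, Finset.mem_univ, true_and, and_iff_right_iff_imp]
  exact fun h => h (self_mem_pathF p k)
end AutPart

lemma dividend_lin {α β : Type*} [DecidableEq α] (s : Finset β)
    (cf : β → ℝ) (f : β → Finset α → ℝ) (E : Finset α) :
    dividend (fun E => ∑ k ∈ s, cf k * f k E) E = ∑ k ∈ s, cf k * dividend (f k) E := by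
  unfold dividend
  simp only [Finset.mul_sum]
  rw [Finset.sum_comm]
  refine Finset.sum_congr rfl fun k _ => ?_
  refine Finset.sum_congr rfl fun F _ => ?_
  ring

theorem stmt11 {α : Type*} [Fintype α] [DecidableEq α]
    (r : α) (p : α → α) (hr : p r = r)
    (hreach : ∀ i : α, ∃ k : ℕ, p^[k] i = r)
    (S : α → Finset α) (hS : S = fun i => if i = r then ∅ else {p i})
    (d : α → ℕ) (hd0 : d r = 0) (hd : ∀ i : α, i ≠ r → d i = d (p i) + 1)
    (c : α → ℝ) (hc : ∀ i, 0 ≤ c i)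
    (v : Finset α → ℝ) (hv : v = fun E => ∑ i ∈ E, c i) :
    ∀ i : α,
      shapley (proj S v) i
        = ∑ k ∈ (univ : Finset α).filter (fun k => ∃ m : ℕ, p^[m] k = i),
            c k / (d k + 1) := by
  intro i
  have hproj : proj S v = fun E => ∑ k ∈ (univ : Finset α), c k * uGame (pathF p k) E :=
    funext (proj_eq hr S hS c v hv)
  rw [shapley, wShapley, hproj]
  have hterm : ∀ E ∈ (univ : Finset α).powerset,
      (if i ∈ E then dividend (fun E => ∑ k ∈ (univ : Finset α), c k * uGame (pathF p k) E) E
          * (1 : ℝ) / (∑ _j ∈ E, (1 : ℝ)) else 0)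
      = ∑ k ∈ (univ : Finset α),
          (if E = pathF p k then (if i ∈ pathF p k then c k / (pathF p k).card else 0) else 0) := by
    intro E _
    rw [dividend_lin]
    simp only [dividend_uGame, Finset.sum_const, nsmul_eq_mul, mul_one]
    by_cases hiE : i ∈ E
    · rw [if_pos hiE, Finset.sum_div]
      refine Finset.sum_congr rfl fun k _ => ?_
      by_cases hEP : E = pathF p k
      · subst hEP
        rw [if_pos rfl, if_pos rfl, if_pos hiE, mul_one]
      · rw [if_neg hEP, if_neg hEP, mul_zero, zero_div]
    · rw [if_neg hiE, eq_comm]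
      apply Finset.sum_eq_zero
      intro k _
      by_cases hEP : E = pathF p k
      · subst hEP
        rw [if_pos rfl, if_neg hiE]
      · rw [if_neg hEP]
  rw [Finset.sum_congr rfl hterm, Finset.sum_comm]
  have hinner : ∀ k ∈ (univ : Finset α),
      (∑ E ∈ (univ : Finset α).powerset,
          (if E = pathF p k then (if i ∈ pathF p k then c k / (pathF p k).card else 0) else 0))
      = if i ∈ pathF p k then c k / (pathF p k).card else 0 := by
    intro k _
    rw [Finset.sum_eq_single (pathF p k)]
    · rw [if_pos rfl]
    · intro E _ hE; rw [if_neg hE]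
    · intro h
      exact absurd (Finset.mem_powerset.2 (Finset.subset_univ _)) h
  rw [Finset.sum_congr rfl hinner]
  rw [← Finset.sum_filter]
  apply Finset.sum_congr
  · apply Finset.filter_congr
    intro k _
    rw [mem_pathF]
  · intro k hk
    rw [card_pathF hr hreach d hd0 hd k]
    push_cast
    ring
end

section
/- Let v be an additive game on a rooted tree with v_i≥0 for all i, and let the reward of player i be φ'_i=∑_{k∈T_i} v_k/(d_k+1) (the Shapley value with tree permission structure). Then removing any leaf j from the tree never increases the reward of any remaining player i; in particular for the parent i of leaf j, φ'_i computed on the full tree is at least φ'_i computed on the tree without j, and the increase is at most v_j/2. Hence the Shapley value with permission structure is diffusion incentive compatible for additive games on trees. -/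
open Finset
open scoped Classical

/-- The Shapley value with tree permission structure of an additive game with
individual values `c`, computed on the player set `M`:
`φ'_i = ∑_{k ∈ T_i ∩ M} c k / (d k + 1)`. -/
noncomputable def treeReward {α : Type*} [DecidableEq α]
    (p : α → α) (d : α → ℕ) (c : α → ℝ) (M : Finset α) (i : α) : ℝ :=
  ∑ k ∈ M.filter (fun k => ∃ m : ℕ, p^[m] k = i), c k / (d k + 1)

theorem stmt13 {α : Type*} [Fintype α] [DecidableEq α]
    (r : α) (p : α → α) (hr : p r = r)
    (hreach : ∀ i : α, ∃ k : ℕ, p^[k] i = r)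
    (d : α → ℕ) (hd0 : d r = 0) (hd : ∀ i : α, i ≠ r → d i = d (p i) + 1)
    (c : α → ℝ) (hc : ∀ i, 0 ≤ c i)
    (j : α) (hj : j ≠ r) (hleaf : ∀ k : α, k ≠ j → p k ≠ j) :
    (∀ i : α, i ≠ j →
      treeReward p d c ((univ : Finset α) \ {j}) i ≤ treeReward p d c univ i) ∧
    treeReward p d c ((univ : Finset α) \ {j}) (p j) ≤ treeReward p d c univ (p j) ∧
    treeReward p d c univ (p j) - treeReward p d c ((univ : Finset α) \ {j}) (p j)
      ≤ c j / 2 := by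
  have hnn : ∀ k : α, 0 ≤ c k / (d k + 1) := by
    intro k
    apply div_nonneg (hc k)
    positivity
  have hset : ∀ i : α,
      (((univ : Finset α) \ {j}).filter (fun k => ∃ m : ℕ, p^[m] k = i)) =
      ((univ : Finset α).filter (fun k => ∃ m : ℕ, p^[m] k = i)).erase j := by
    intro i
    ext x
    simp [Finset.mem_erase, Finset.mem_sdiff, and_comm]
  have hmono : ∀ i : α,
      treeReward p d c ((univ : Finset α) \ {j}) i ≤ treeReward p d c univ i := by
    intro i
    unfold treeReward
    rw [hset i]
    exact Finset.sum_le_sum_of_subset_of_nonneg (Finset.erase_subset _ _)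
      (fun k _ _ => hnn k)
  refine ⟨fun i _ => hmono i, hmono (p j), ?_⟩
  have hjmem : j ∈ (univ : Finset α).filter (fun k => ∃ m : ℕ, p^[m] k = p j) := by
    simp only [Finset.mem_filter, Finset.mem_univ, true_and]
    exact ⟨1, rfl⟩
  have hdiff : treeReward p d c univ (p j) -
      treeReward p d c ((univ : Finset α) \ {j}) (p j) = c j / (d j + 1) := by
    unfold treeReward
    rw [hset (p j), ← Finset.sum_erase_add _ _ hjmem]
    ring
  rw [hdiff]
  have hdj : (1 : ℝ) ≤ d j := by
    have := hd j hj
    have : (1 : ℕ) ≤ d j := by omega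
    exact_mod_cast this
  gcongr
  · exact hc j
  · linarith
end

section
/- Let v be a monotone game on a rooted tree with tree permission structure, and let the mechanism assign each player the Shapley value of the projected game v'(E)=v(α(E)). Then the mechanism is efficient (rewards sum to v(N)) and diffusion incentive compatible: for any player i and any subset X of edges from i to its children, i's reward in the full tree is at least i's reward in the tree obtained by deleting X (and all players thereby disconnected from the root). -/
open Finset
open scoped Classical

/-- The Shapley value of the game `v` restricted to the player set `M`
(via the Harsanyi-dividend formula). -/
noncomputable def shapleyOn {α : Type*} [DecidableEq α]
    (M : Finset α) (v : Finset α → ℝ) (i : α) : ℝ :=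
  ∑ E ∈ M.powerset, if i ∈ E then dividend v E / E.card else 0


/-! ### Auxiliary numeric lemmas -/

/-- The classical Shapley coefficient `b! (n-1-b)! / n!`. -/
noncomputable def qc (b n : ℕ) : ℝ := b.factorial * (n - 1 - b).factorial / n.factorial

lemma qc_nonneg (b n : ℕ) : 0 ≤ qc b n := by unfold qc; positivity

lemma fact_id (b c : ℕ) :
    (b.factorial : ℝ) * c.factorial / (b+c+1).factorial
      = b.factorial * (c+1).factorial / (b+c+2).factorial
        + (b+1).factorial * c.factorial / (b+c+2).factorial := by
  have e1 : (b+c+2).factorial = (b+c+2) * (b+c+1).factorial := Nat.factorial_succ _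
  have e2 : (c+1).factorial = (c+1) * c.factorial := Nat.factorial_succ _
  have e3 : (b+1).factorial = (b+1) * b.factorial := Nat.factorial_succ _
  have h1 : ((b+c+1).factorial : ℝ) ≠ 0 := by positivity
  have h2 : ((b:ℝ)+c+2) ≠ 0 := by positivity
  rw [e1, e2, e3]
  push_cast
  field_simp
  ring

lemma qc_step {b n : ℕ} (h : b + 1 ≤ n) : qc b n = qc b (n+1) + qc (b+1) (n+1) := by
  have hc : n - 1 - b + 1 + b = n := by omega
  set c := n - 1 - b with hcdef
  have hn : n = b + c + 1 := by omega
  have h1 : n + 1 - 1 - b = c + 1 := by omega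
  have h2 : n + 1 - 1 - (b+1) = c := by omega
  unfold qc
  rw [h1, h2, hn]
  have h3 : b + c + 1 - 1 - b = c := by omega
  rw [h3]
  have : b + c + 1 + 1 = b + c + 2 := by ring
  rw [this]
  exact fact_id b c

lemma choose_sum_succ (d : ℕ) (x : ℕ → ℝ) :
    ∑ j ∈ range (d+2), ((d+1).choose j : ℝ) * x j =
      ∑ j ∈ range (d+1), (d.choose j : ℝ) * x j
      + ∑ j ∈ range (d+1), (d.choose j : ℝ) * x (j+1) := by
  rw [Finset.sum_range_succ' (fun j => ((d+1).choose j : ℝ) * x j)]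
  have h1 : ∀ j, ((d+1).choose (j+1) : ℝ) = (d.choose j : ℝ) + (d.choose (j+1) : ℝ) := by
    intro j; exact_mod_cast congrArg (Nat.cast (R := ℝ)) (Nat.choose_succ_succ d j)
  have : ∑ j ∈ range (d+1), ((d+1).choose (j+1) : ℝ) * x (j+1)
      = ∑ j ∈ range (d+1), (d.choose j : ℝ) * x (j+1)
        + ∑ j ∈ range (d+1), (d.choose (j+1) : ℝ) * x (j+1) := by
    rw [← Finset.sum_add_distrib]
    exact Finset.sum_congr rfl fun j _ => by rw [h1 j, add_mul]
  rw [this]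
  have h2 : ∑ j ∈ range (d+1), (d.choose (j+1) : ℝ) * x (j+1)
      = ∑ j ∈ range (d+1), (d.choose j : ℝ) * x j - x 0 := by
    have := Finset.sum_range_succ' (fun j => (d.choose j : ℝ) * x j) d
    have h3 : ∑ j ∈ range (d+1), (d.choose (j+1) : ℝ) * x (j+1)
        = ∑ j ∈ range d, (d.choose (j+1) : ℝ) * x (j+1) := by
      rw [Finset.sum_range_succ]
      simp [Nat.choose_succ_self]
    rw [h3]
    rw [this]; simp [Nat.choose_succ_self]
  rw [h2]; simp [Nat.choose_zero_right]; ring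

lemma fact_id2 (g d : ℕ) :
    (g.factorial : ℝ) * (d+1).factorial / (g+d+2).factorial
      = g.factorial * d.factorial / (g+d+1).factorial
        - (g+1).factorial * d.factorial / (g+d+2).factorial := by
  have e1 : (g+d+2).factorial = (g+d+2) * (g+d+1).factorial := Nat.factorial_succ _
  have e2 : (d+1).factorial = (d+1) * d.factorial := Nat.factorial_succ _
  have e3 : (g+1).factorial = (g+1) * g.factorial := Nat.factorial_succ _
  have h1 : ((g+d+1).factorial : ℝ) ≠ 0 := by positivity
  have h2 : ((g:ℝ)+d+2) ≠ 0 := by positivity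
  rw [e1, e2, e3]; push_cast; field_simp; ring

lemma keyK : ∀ d g : ℕ,
    ∑ j ∈ range (d+1), (d.choose j : ℝ) * ((-1)^j / ((g:ℝ)+1+j))
      = g.factorial * d.factorial / (g+d+1).factorial := by
  intro d
  induction d with
  | zero =>
    intro g
    simp [Nat.factorial_succ]
    have hne : ((1:ℝ)+g) ≠ 0 := by positivity
    field_simp
  | succ d ih =>
    intro g
    have hsplit := choose_sum_succ d (fun j => (-1)^j / ((g:ℝ)+1+j))
    rw [show d+1+1 = d+2 from rfl, hsplit]
    have h2 : ∑ j ∈ range (d+1), (d.choose j : ℝ) * ((-1)^(j+1) / ((g:ℝ)+1+((j+1:ℕ):ℝ)))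
        = - ∑ j ∈ range (d+1), (d.choose j : ℝ) * ((-1)^j / (((g+1):ℕ)+1+j)) := by
      rw [← Finset.sum_neg_distrib]
      refine Finset.sum_congr rfl fun j _ => ?_
      push_cast
      ring
    rw [h2, ih g, ih (g+1)]
    have h3 : g + (d+1) + 1 = g + d + 2 := by ring
    have h4 : (g+1) + d + 1 = g + d + 2 := by ring
    rw [h3, h4, fact_id2 g d]
    push_cast [Nat.factorial_succ]
    ring

lemma keyJ : ∀ D b m : ℕ, b + 1 ≤ m →
    ∑ c ∈ range (D+1), (D.choose c : ℝ) * qc (b+c) (m+D) = qc b m := by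
  intro D
  induction D with
  | zero => intro b m _; simp
  | succ D ih =>
    intro b m hbm
    rw [show D+1+1 = D+2 from rfl, choose_sum_succ D (fun c => qc (b+c) (m+(D+1)))]
    rw [← Finset.sum_add_distrib]
    have : ∑ c ∈ range (D+1), ((D.choose c : ℝ) * qc (b+c) (m+(D+1))
          + (D.choose c : ℝ) * qc (b+(c+1)) (m+(D+1)))
        = ∑ c ∈ range (D+1), (D.choose c : ℝ) * qc (b+c) (m+D) := by
      refine Finset.sum_congr rfl fun c hc => ?_
      rw [mem_range] at hc
      have hstep := qc_step (b := b+c) (n := m+D) (by omega)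
      rw [← mul_add]
      congr 1
      rw [show m+(D+1) = (m+D)+1 from rfl, show b+(c+1) = (b+c)+1 from rfl]
      exact hstep.symm
    rw [this, ih b m hbm]

/-! ### Auxiliary Finset lemmas -/

lemma swap_powerset {α : Type*} [DecidableEq α] (s : Finset α) (h : Finset α → Finset α → ℝ) :
    ∑ A ∈ s.powerset, ∑ G ∈ A.powerset, h A G
      = ∑ G ∈ s.powerset, ∑ H ∈ (s \ G).powerset, h (G ∪ H) G := by
  rw [← Finset.sum_sigma s.powerset (fun A => A.powerset) (fun x => h x.1 x.2),
      ← Finset.sum_sigma s.powerset (fun G => (s \ G).powerset) (fun y => h (y.1 ∪ y.2) y.1)]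
  refine Finset.sum_nbij' (fun x => ⟨x.2, x.1 \ x.2⟩) (fun y => ⟨y.1 ∪ y.2, y.1⟩) ?_ ?_ ?_ ?_ ?_
  · rintro ⟨A, G⟩ hx
    simp only [Finset.mem_sigma, Finset.mem_powerset] at hx ⊢
    exact ⟨hx.2.trans hx.1, sdiff_subset_sdiff hx.1 le_rfl⟩
  · rintro ⟨G, H⟩ hy
    simp only [Finset.mem_sigma, Finset.mem_powerset] at hy ⊢
    exact ⟨Finset.union_subset hy.1 (hy.2.trans Finset.sdiff_subset), Finset.subset_union_left⟩
  · rintro ⟨A, G⟩ hx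
    simp only [Finset.mem_sigma, Finset.mem_powerset] at hx
    simp only [Sigma.mk.inj_iff]
    exact ⟨Finset.union_sdiff_of_subset hx.2, heq_of_eq rfl⟩
  · rintro ⟨G, H⟩ hy
    simp only [Finset.mem_sigma, Finset.mem_powerset] at hy
    simp only [Sigma.mk.inj_iff, heq_eq_eq]
    exact ⟨trivial, Finset.union_sdiff_cancel_left
      (Finset.disjoint_of_subset_right hy.2 Finset.sdiff_disjoint.symm)⟩
  · rintro ⟨A, G⟩ hx
    simp only [Finset.mem_sigma, Finset.mem_powerset] at hx
    simp only
    rw [Finset.union_sdiff_of_subset hx.2]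

lemma sum_powerset_union_disj {α : Type*} [DecidableEq α] {s t : Finset α} (hst : Disjoint s t)
    (f : Finset α → ℝ) :
    ∑ B ∈ (s ∪ t).powerset, f B = ∑ a ∈ s.powerset, ∑ c ∈ t.powerset, f (a ∪ c) := by
  rw [← Finset.sum_product']
  refine (Finset.sum_nbij' (fun x => x.1 ∪ x.2) (fun B => (B ∩ s, B ∩ t)) ?_ ?_ ?_ ?_ ?_).symm
  · rintro ⟨a, c⟩ hx
    simp only [Finset.mem_product, Finset.mem_powerset] at hx ⊢
    exact Finset.union_subset_union hx.1 hx.2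
  · intro B hB
    simp only [Finset.mem_powerset] at hB ⊢
    simp only [Finset.mem_product, Finset.mem_powerset]
    exact ⟨Finset.inter_subset_right, Finset.inter_subset_right⟩
  · rintro ⟨a, c⟩ hx
    simp only [Finset.mem_product, Finset.mem_powerset] at hx
    have hcs : ∀ x ∈ c, x ∉ s := fun x hxc hxs => (Finset.disjoint_left.1 hst) hxs (hx.2 hxc)
    have has : ∀ x ∈ a, x ∉ t := fun x hxa hxt => (Finset.disjoint_left.1 hst) (hx.1 hxa) hxt
    have h1 : (a ∪ c) ∩ s = a := by
      ext x
      simp only [Finset.mem_inter, Finset.mem_union]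
      constructor
      · rintro ⟨h | h, hs⟩
        · exact h
        · exact absurd hs (hcs x h)
      · intro h; exact ⟨Or.inl h, hx.1 h⟩
    have h2 : (a ∪ c) ∩ t = c := by
      ext x
      simp only [Finset.mem_inter, Finset.mem_union]
      constructor
      · rintro ⟨h | h, ht⟩
        · exact absurd ht (has x h)
        · exact h
      · intro h; exact ⟨Or.inr h, hx.2 h⟩
    simp [h1, h2]
  · intro B hB
    simp only [Finset.mem_powerset] at hB
    simp only
    rw [← Finset.inter_union_distrib_left, Finset.inter_eq_left.2 hB]
  · rintro ⟨a, c⟩ hx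
    rfl

lemma sum_powerset_mem_insert {α : Type*} [DecidableEq α] {M : Finset α} {i : α} (hi : i ∈ M)
    (f : Finset α → ℝ) :
    ∑ E ∈ M.powerset, (if i ∈ E then f E else 0)
      = ∑ A ∈ (M.erase i).powerset, f (insert i A) := by
  have h1 : M = insert i (M.erase i) := (Finset.insert_erase hi).symm
  conv_lhs => rw [h1, Finset.sum_powerset_insert (Finset.notMem_erase i M)]
  have h2 : ∀ A ∈ (M.erase i).powerset, (if i ∈ A then f A else 0) = 0 := by
    intro A hA
    rw [Finset.mem_powerset] at hA
    rw [if_neg (fun hiA => Finset.notMem_erase i M (hA hiA))]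
  rw [Finset.sum_congr rfl h2, Finset.sum_const_zero, zero_add]
  exact Finset.sum_congr rfl fun A hA => if_pos (Finset.mem_insert_self i A)

lemma neg_one_powerset {α : Type*} [DecidableEq α] (x : Finset α) :
    ∑ H ∈ x.powerset, ((-1:ℝ))^H.card = if x = ∅ then 1 else 0 := by
  have h := Finset.sum_powerset_neg_one_pow_card (α := α) (x := x)
  have h2 := congrArg (Int.cast : ℤ → ℝ) h
  push_cast at h2
  rw [h2]

/-! ### Dividends and the Shapley formulas -/

lemma mobius {α : Type*} [DecidableEq α] (w : Finset α → ℝ) (E : Finset α) :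
    ∑ F ∈ E.powerset, dividend w F = w E := by
  unfold dividend
  rw [swap_powerset E (fun F G => (-1:ℝ)^(F.card - G.card) * w G)]
  have h1 : ∀ G ∈ E.powerset,
      ∑ H ∈ (E \ G).powerset, (-1:ℝ)^((G ∪ H).card - G.card) * w G
        = (if E \ G = ∅ then 1 else 0) * w G := by
    intro G hG
    rw [← Finset.sum_mul, ← neg_one_powerset (E \ G)]
    congr 1
    refine Finset.sum_congr rfl fun H hH => ?_
    rw [Finset.mem_powerset] at hH
    have hd : Disjoint G H :=
      Finset.disjoint_of_subset_right hH Finset.sdiff_disjoint.symm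
    rw [Finset.card_union_of_disjoint hd]
    congr 1
    omega
  rw [Finset.sum_congr rfl h1]
  have h2 : ∀ G ∈ E.powerset, (if E \ G = ∅ then 1 else 0) * w G
      = (if G = E then w E else 0) := by
    intro G hG
    rw [Finset.mem_powerset] at hG
    by_cases hGE : G = E
    · subst hGE; simp
    · rw [if_neg hGE, if_neg, zero_mul]
      rw [Finset.sdiff_eq_empty_iff_subset]
      intro hEG
      exact hGE (Finset.Subset.antisymm hG hEG)
  rw [Finset.sum_congr rfl h2, Finset.sum_ite_eq' E.powerset E (fun _ => w E)]
  rw [if_pos (Finset.mem_powerset_self E)]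

lemma dividend_insert {α : Type*} [DecidableEq α] (w : Finset α → ℝ) {i : α} {A : Finset α}
    (hiA : i ∉ A) :
    dividend w (insert i A)
      = ∑ G ∈ A.powerset, (-1:ℝ)^(A.card - G.card) * (w (insert i G) - w G) := by
  unfold dividend
  rw [Finset.sum_powerset_insert hiA]
  rw [Finset.card_insert_of_notMem hiA]
  have h1 : ∀ F ∈ A.powerset, (-1:ℝ)^(A.card + 1 - F.card) * w F
      = -((-1:ℝ)^(A.card - F.card) * w F) := by
    intro F hF
    rw [Finset.mem_powerset] at hF
    have : A.card + 1 - F.card = (A.card - F.card) + 1 := by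
      have := Finset.card_le_card hF; omega
    rw [this, pow_succ]
    ring
  have h2 : ∀ G ∈ A.powerset, (-1:ℝ)^(A.card + 1 - (insert i G).card) * w (insert i G)
      = (-1:ℝ)^(A.card - G.card) * w (insert i G) := by
    intro G hG
    rw [Finset.mem_powerset] at hG
    have hiG : i ∉ G := fun h => hiA (hG h)
    rw [Finset.card_insert_of_notMem hiG]
    congr 2
    have := Finset.card_le_card hG; omega
  rw [Finset.sum_congr rfl h1, Finset.sum_congr rfl h2]
  rw [← Finset.sum_add_distrib]
  refine Finset.sum_congr rfl fun G hG => ?_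
  ring

lemma shapley_marg {α : Type*} [DecidableEq α] (M : Finset α) (w : Finset α → ℝ) {i : α}
    (hi : i ∈ M) :
    shapleyOn M w i
      = ∑ B ∈ (M.erase i).powerset, qc B.card M.card * (w (insert i B) - w B) := by
  unfold shapleyOn
  rw [sum_powerset_mem_insert hi (fun E => dividend w E / E.card)]
  set s := M.erase i with hs
  have hscard : s.card = M.card - 1 := Finset.card_erase_of_mem hi
  have hM1 : 1 ≤ M.card := Finset.card_pos.2 ⟨i, hi⟩
  have step1 : ∀ A ∈ s.powerset,
      dividend w (insert i A) / ((insert i A).card : ℝ)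
        = ∑ G ∈ A.powerset,
            (-1:ℝ)^(A.card - G.card) / ((A.card : ℝ)+1) * (w (insert i G) - w G) := by
    intro A hA
    rw [Finset.mem_powerset] at hA
    have hiA : i ∉ A := fun h => Finset.notMem_erase i M (hA h)
    rw [dividend_insert w hiA, Finset.card_insert_of_notMem hiA, Finset.sum_div]
    push_cast
    refine Finset.sum_congr rfl fun G hG => ?_
    ring
  rw [Finset.sum_congr rfl step1]
  rw [swap_powerset s (fun A G => (-1:ℝ)^(A.card - G.card) / ((A.card : ℝ)+1)
    * (w (insert i G) - w G))]
  refine Finset.sum_congr rfl fun G hG => ?_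
  rw [Finset.mem_powerset] at hG
  have hGs : G.card ≤ s.card := Finset.card_le_card hG
  have step2 : ∀ H ∈ (s \ G).powerset,
      (-1:ℝ)^((G ∪ H).card - G.card) / (((G ∪ H).card : ℝ)+1) * (w (insert i G) - w G)
        = ((-1:ℝ)^(H.card) / ((G.card:ℝ)+1+(H.card:ℝ))) * (w (insert i G) - w G) := by
    intro H hH
    rw [Finset.mem_powerset] at hH
    have hd : Disjoint G H :=
      Finset.disjoint_of_subset_right hH Finset.sdiff_disjoint.symm
    rw [Finset.card_union_of_disjoint hd]
    have e1 : G.card + H.card - G.card = H.card := by omega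
    rw [e1]
    congr 1
    push_cast
    ring_nf
  rw [Finset.sum_congr rfl step2, ← Finset.sum_mul]
  have step3 : ∑ H ∈ (s \ G).powerset, (-1:ℝ)^(H.card) / ((G.card:ℝ)+1+(H.card:ℝ))
      = qc G.card M.card := by
    have := Finset.sum_powerset_apply_card
      (fun j => (-1:ℝ)^j / ((G.card:ℝ)+1+(j:ℝ))) (x := s \ G)
    rw [this]
    have hd : (s \ G).card = s.card - G.card := Finset.card_sdiff_of_subset hG
    have h4 : ∑ m ∈ range ((s\G).card + 1),
        ((s\G).card.choose m) • ((-1:ℝ)^m / ((G.card:ℝ)+1+(m:ℝ)))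
        = ∑ m ∈ range ((s\G).card + 1),
          (((s\G).card.choose m : ℝ)) * ((-1:ℝ)^m / ((G.card:ℝ)+1+(m:ℝ))) := by
      refine Finset.sum_congr rfl fun m _ => ?_
      rw [nsmul_eq_mul]
    rw [h4, keyK ((s\G).card) G.card]
    unfold qc
    have e2 : G.card + (s\G).card + 1 = M.card := by omega
    have e3 : (s\G).card = M.card - 1 - G.card := by omega
    rw [e2, e3]
  rw [step3, mul_comm]

/-! ### Tree structure lemmas -/

lemma iter_root {α : Type*} (r : α) (p : α → α) (hr : p r = r) : ∀ t : ℕ, p^[t] r = r := by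
  intro t
  induction t with
  | zero => rfl
  | succ t ih => rw [Function.iterate_succ_apply', ih, hr]

lemma autPart_char {α : Type*} [DecidableEq α] (r : α) (p : α → α) (hr : p r = r)
    (S : α → Finset α) (hS : S = fun i => if i = r then ∅ else {p i}) (E : Finset α) :
    autPart S E = E.filter (fun k => ∀ m : ℕ, p^[m] k ∈ E) := by
  set A := E.filter (fun k => ∀ m : ℕ, p^[m] k ∈ E) with hA
  apply le_antisymm
  · apply Finset.sup_le
    intro F hF
    rw [Finset.mem_filter, Finset.mem_powerset] at hF
    obtain ⟨hFE, hFaut⟩ := hF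
    intro k hk
    have hiter : ∀ m : ℕ, p^[m] k ∈ F := by
      intro m
      induction m with
      | zero => exact hk
      | succ m ih =>
        rw [Function.iterate_succ_apply']
        by_cases hy : p^[m] k = r
        · rw [hy, hr, ← hy]; exact ih
        · have := hFaut _ ih
          rw [hS] at this
          simp only [if_neg hy] at this
          exact this (Finset.mem_singleton_self _)
    exact Finset.mem_filter.2 ⟨hFE hk, fun m => hFE (hiter m)⟩
  · have hmem : A ∈ E.powerset.filter (autonomous S) := by
      rw [Finset.mem_filter, Finset.mem_powerset]
      refine ⟨Finset.filter_subset _ _, ?_⟩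
      intro k hk
      rw [hA, Finset.mem_filter] at hk
      rw [hS]
      by_cases hkr : k = r
      · simp [hkr]
      · simp only [if_neg hkr, Finset.singleton_subset_iff]
        rw [hA]
        refine Finset.mem_filter.2 ⟨?_, fun m => ?_⟩
        · have := hk.2 1; simpa using this
        · have := hk.2 (m+1)
          rwa [Function.iterate_succ_apply] at this
    exact Finset.le_sup (f := id) hmem

lemma not_iter_mem_X {α : Type*} [Fintype α] [DecidableEq α] (r : α) (p : α → α) (hr : p r = r)
    (hreach : ∀ i : α, ∃ k : ℕ, p^[k] i = r) (i : α) (X : Finset α)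
    (hX : X ⊆ (univ : Finset α).filter (fun j => p j = i ∧ j ≠ r)) :
    ∀ m : ℕ, p^[m] i ∉ X := by
  intro m hm
  have hj := hX hm
  rw [Finset.mem_filter] at hj
  obtain ⟨-, hpj, hjr⟩ := hj
  have hcyc : p^[m+1] i = i := by rw [Function.iterate_succ_apply', hpj]
  by_cases hir : i = r
  · rw [hir] at hjr
    rw [iter_root r p hr m] at hjr
    exact hjr rfl
  · obtain ⟨K, hK⟩ := hreach i
    have hKpos : K ≠ 0 := fun h => hir (by rw [h] at hK; exact hK)
    have hper : ∀ k : ℕ, p^[k*(m+1)] i = i := by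
      intro k
      induction k with
      | zero => simp
      | succ k ih =>
        rw [Nat.succ_mul, Function.iterate_add_apply, hcyc, ih]
    have h1 : p^[K*(m+1)] i = r := by
      have hle : K ≤ K*(m+1) := Nat.le_mul_of_pos_right K (Nat.succ_pos m)
      have he : K*(m+1) = (K*(m+1) - K) + K := by omega
      rw [he, Function.iterate_add_apply, hK, iter_root r p hr _]
    rw [hper K] at h1
    exact hir h1

lemma autPart_union_blocked {α : Type*} [DecidableEq α] (r : α) (p : α → α) (hr : p r = r)
    (S : α → Finset α) (hS : S = fun i => if i = r then ∅ else {p i}) (i : α) (X : Finset α)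
    (hXi : ∀ j ∈ X, p j = i) (B C : Finset α)
    (hC : ∀ k ∈ C, ∃ m : ℕ, p^[m] k ∈ X) (hiB : i ∉ B) (hiC : i ∉ C) :
    autPart S (B ∪ C) = autPart S B := by
  rw [autPart_char r p hr S hS, autPart_char r p hr S hS]
  ext k
  simp only [Finset.mem_filter, Finset.mem_union]
  constructor
  · rintro ⟨hk, hall⟩
    have hnotC : ∀ m : ℕ, p^[m] k ∉ C := by
      intro m hmC
      obtain ⟨m', hm'⟩ := hC _ hmC
      have hX1 : p^[m'+m] k ∈ X := by
        rw [Function.iterate_add_apply]; exact hm'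
      have hI : p^[(m'+m)+1] k = i := by
        rw [Function.iterate_succ_apply', hXi _ hX1]
      have := hall ((m'+m)+1)
      rw [hI] at this
      rcases this with h | h
      · exact hiB h
      · exact hiC h
    have hallB : ∀ m : ℕ, p^[m] k ∈ B := fun m => (hall m).resolve_right (hnotC m)
    refine ⟨?_, hallB⟩
    have := hallB 0
    simpa using this
  · rintro ⟨hk, hall⟩
    exact ⟨Or.inl hk, fun m => Or.inl (hall m)⟩

theorem stmt14 {α : Type*} [Fintype α] [DecidableEq α]
    (r : α) (p : α → α) (hr : p r = r)
    (hreach : ∀ i : α, ∃ k : ℕ, p^[k] i = r)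
    (S : α → Finset α) (hS : S = fun i => if i = r then ∅ else {p i})
    (v : Finset α → ℝ) (hv0 : v ∅ = 0)
    (hmono : ∀ E F : Finset α, E ⊆ F → v E ≤ v F) :
    -- efficiency
    (∑ i : α, shapleyOn univ (proj S v) i = v univ) ∧
    -- diffusion incentive compatibility: deleting any set `X` of edges from `i`
    -- to its children (removing all players disconnected from the root) never
    -- increases `i`'s reward
    (∀ i : α, ∀ X : Finset α,
      X ⊆ (univ : Finset α).filter (fun j => p j = i ∧ j ≠ r) →
      shapleyOn ((univ : Finset α).filter (fun k => ∀ m : ℕ, p^[m] k ∉ X)) (proj S v) i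
        ≤ shapleyOn univ (proj S v) i) := by
  -- abbreviations
  set w := proj S v with hw
  have hwmono : ∀ E F : Finset α, E ⊆ F → w E ≤ w F := by
    intro E F hEF
    rw [hw]
    unfold proj
    apply hmono
    rw [autPart_char r p hr S hS, autPart_char r p hr S hS]
    intro k hk
    rw [Finset.mem_filter] at hk ⊢
    exact ⟨hEF hk.1, fun m => hEF (hk.2 m)⟩
  have hw0 : w ∅ = 0 := by
    rw [hw]
    unfold proj
    rw [autPart_char r p hr S hS, Finset.filter_empty, hv0]
  have hwuniv : w univ = v univ := by
    rw [hw]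
    unfold proj
    rw [autPart_char r p hr S hS]
    congr 1
    exact Finset.filter_true_of_mem (fun k _ => fun m => Finset.mem_univ _)
  constructor
  · -- efficiency
    unfold shapleyOn
    rw [Finset.sum_comm]
    have h1 : ∀ E ∈ (univ : Finset α).powerset,
        (∑ i : α, if i ∈ E then dividend w E / E.card else 0) = dividend w E := by
      intro E _
      rw [Finset.sum_ite_mem, Finset.univ_inter, Finset.sum_const]
      by_cases hEe : E = ∅
      · subst hEe
        simp [dividend, hw0]
      · have hc : (E.card : ℝ) ≠ 0 := by
          exact_mod_cast Finset.card_ne_zero.2 (Finset.nonempty_iff_ne_empty.2 hEe)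
        rw [nsmul_eq_mul]
        field_simp
    rw [Finset.sum_congr rfl h1, mobius w univ, hwuniv]
  · -- diffusion incentive compatibility
    intro i X hX
    have hXi : ∀ j ∈ X, p j = i := fun j hj => ((Finset.mem_filter.1 (hX hj)).2).1
    have hiMp : ∀ m : ℕ, p^[m] i ∉ X := not_iter_mem_X r p hr hreach i X hX
    set M := (univ : Finset α).filter (fun k => ∀ m : ℕ, p^[m] k ∉ X) with hM
    have hiM : i ∈ M := Finset.mem_filter.2 ⟨Finset.mem_univ i, hiMp⟩
    set D := (univ : Finset α) \ M with hD
    have hsM : M.erase i ⊆ M := Finset.erase_subset i M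
    have hdisj : Disjoint (M.erase i) D :=
      Finset.disjoint_of_subset_left hsM (Finset.disjoint_sdiff)
    have hsplit : (univ : Finset α).erase i = M.erase i ∪ D := by
      ext k
      simp only [hD, Finset.mem_union, Finset.mem_erase, Finset.mem_sdiff,
        Finset.mem_univ, true_and, and_true]
      by_cases hkM : k ∈ M
      · constructor
        · intro hki; exact Or.inl ⟨hki, hkM⟩
        · rintro (⟨hki, -⟩ | hk); exact hki; exact absurd hkM hk
      · constructor
        · intro hki; exact Or.inr hkM
        · rintro (⟨-, hk⟩ | -)
          · exact absurd hk hkM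
          · intro hki
            subst hki
            exact hkM hiM
    have hcard : (univ : Finset α).card = M.card + D.card := by
      have h1 : D.card = (univ : Finset α).card - M.card :=
        Finset.card_sdiff_of_subset (Finset.subset_univ M)
      have h2 : M.card ≤ (univ : Finset α).card := Finset.card_le_card (Finset.subset_univ M)
      omega
    have hM1 : 1 ≤ M.card := Finset.card_pos.2 ⟨i, hiM⟩
    rw [shapley_marg (univ : Finset α) w (Finset.mem_univ i), shapley_marg M w hiM]
    rw [hsplit, sum_powerset_union_disj hdisj]
    apply Finset.sum_le_sum
    intro a ha
    rw [Finset.mem_powerset] at ha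
    have hacard : a.card ≤ M.card - 1 := by
      have h1 := Finset.card_le_card ha
      have h2 : (M.erase i).card = M.card - 1 := Finset.card_erase_of_mem hiM
      omega
    have hia : i ∉ a := fun h => Finset.notMem_erase i M (ha h)
    have hsum : ∑ c ∈ D.powerset, qc (a.card + c.card) (univ : Finset α).card
        = qc a.card M.card := by
      rw [Finset.sum_powerset_apply_card (fun j => qc (a.card + j) (univ : Finset α).card)
        (x := D)]
      have h4 : ∑ m ∈ range (D.card + 1),
          (D.card.choose m) • qc (a.card + m) (univ : Finset α).card
          = ∑ m ∈ range (D.card + 1),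
            ((D.card.choose m : ℝ)) * qc (a.card + m) (univ : Finset α).card := by
        refine Finset.sum_congr rfl fun m _ => ?_
        rw [nsmul_eq_mul]
      rw [h4, hcard]
      exact keyJ D.card a.card M.card (by omega)
    calc qc a.card M.card * (w (insert i a) - w a)
        = ∑ c ∈ D.powerset, qc (a.card + c.card) (univ : Finset α).card
            * (w (insert i a) - w a) := by
          rw [← Finset.sum_mul, hsum]
      _ ≤ ∑ c ∈ D.powerset, qc ((a ∪ c).card) (univ : Finset α).card
            * (w (insert i (a ∪ c)) - w (a ∪ c)) := by
          apply Finset.sum_le_sum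
          intro c hc
          rw [Finset.mem_powerset] at hc
          have hdisj2 : Disjoint a c := hdisj.mono ha hc
          rw [Finset.card_union_of_disjoint hdisj2]
          have hic : i ∉ c := fun h => (Finset.mem_sdiff.1 (hc h)).2 hiM
          have hCprop : ∀ k ∈ c, ∃ m : ℕ, p^[m] k ∈ X := by
            intro k hk
            have hkD := hc hk
            rw [hD, Finset.mem_sdiff] at hkD
            have := hkD.2
            rw [hM, Finset.mem_filter] at this
            push_neg at this
            exact this (Finset.mem_univ k)
          have hwac : w (a ∪ c) = w a := by
            rw [hw]
            unfold proj
            rw [autPart_union_blocked r p hr S hS i X hXi a c hCprop hia hic]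
          have hwin : w (insert i a) ≤ w (insert i (a ∪ c)) :=
            hwmono _ _ (Finset.insert_subset_insert i Finset.subset_union_left)
          have hmarg : w (insert i a) - w a ≤ w (insert i (a ∪ c)) - w (a ∪ c) := by
            rw [hwac]; linarith
          exact mul_le_mul_of_nonneg_left hmarg (qc_nonneg _ _)
end

section
/- For any mixed permission structure ϱ on N and any nonempty coalition E⊆N, the Harsanyi dividend of the projected unanimity game P_ϱ(u_E) vanishes outside Λ*(E): if F∉Λ*(E) then d^{P_ϱ(u_E)}(F)=0, where Λ*(E) is the set of all unions of minimal autonomous coalitions containing E. Consequently P_ϱ(u_E)=∑_{F∈Λ*(E)} d^{P_ϱ(u_E)}(F)·u_F. -/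
open Finset
open scoped Classical

/-- The unanimity game `u_E`. -/
noncomputable def unanim {α : Type*} [DecidableEq α] (E F : Finset α) : ℝ :=
  if E ⊆ F then 1 else 0

/-- `Λ(E)`: the minimal autonomous coalitions containing `E`. -/
def LamSet {α : Type*} [DecidableEq α] (A : Finset (Finset α)) (E : Finset α) :
    Finset (Finset α) :=
  A.filter (fun F => E ⊆ F ∧ ∀ G ∈ A, E ⊆ G → G ⊆ F → G = F)

/-- `F ∈ Λ*(E)`: `F` is a union of (finitely many, at least one) members of `Λ(E)`. -/
def LamStar {α : Type*} [DecidableEq α] (A : Finset (Finset α)) (E F : Finset α) : Prop :=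
  ∃ T ⊆ LamSet A E, T.Nonempty ∧ F = T.sup id

lemma sum_pm {α : Type*} [DecidableEq α] (X : Finset α) :
    ∑ S ∈ X.powerset, (-1 : ℝ) ^ S.card = if X = ∅ then 1 else 0 := by
  have h := Finset.sum_powerset_neg_one_pow_card (x := X)
  have h2 : ((∑ m ∈ X.powerset, (-1 : ℤ) ^ m.card : ℤ) : ℝ)
      = ∑ S ∈ X.powerset, (-1 : ℝ) ^ S.card := by push_cast; rfl
  rw [← h2, h]; split <;> norm_num

lemma sum_pm2 {α : Type*} [DecidableEq α] (X : Finset α) :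
    ∑ S ∈ X.powerset, (-1 : ℝ) ^ (X.card - S.card) = if X = ∅ then 1 else 0 := by
  rw [← sum_pm X]
  refine Finset.sum_bij' (fun S _ => X \ S) (fun S _ => X \ S) ?_ ?_ ?_ ?_ ?_
  · intro a ha; simp
  · intro a ha; simp
  · intro a ha; simp [Finset.sdiff_sdiff_eq_self (Finset.mem_powerset.1 ha)]
  · intro a ha; simp [Finset.sdiff_sdiff_eq_self (Finset.mem_powerset.1 ha)]
  · intro a ha
    rw [Finset.card_sdiff_of_subset (Finset.mem_powerset.1 ha)]

lemma dividend_unanim {α : Type*} [DecidableEq α] (L F : Finset α) :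
    dividend (unanim L) F = if F = L then 1 else 0 := by
  unfold dividend unanim
  simp only [mul_ite, mul_one, mul_zero]
  rw [Finset.sum_ite, Finset.sum_const_zero, add_zero]
  by_cases hLF : L ⊆ F
  · have key : ∑ S ∈ (F \ L).powerset, (-1 : ℝ) ^ (F.card - (S ∪ L).card)
        = ∑ H ∈ (F.powerset.filter (fun H => L ⊆ H)), (-1 : ℝ) ^ (F.card - H.card) := by
      refine Finset.sum_bij' (fun S _ => S ∪ L) (fun H _ => H \ L) ?_ ?_ ?_ ?_ ?_
      · intro S hS
        simp only [Finset.mem_powerset] at hS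
        simp only [Finset.mem_filter, Finset.mem_powerset]
        exact ⟨Finset.union_subset (hS.trans (Finset.sdiff_subset)) hLF, Finset.subset_union_right⟩
      · intro H hH
        simp only [Finset.mem_filter, Finset.mem_powerset] at hH
        simp only [Finset.mem_powerset]
        exact Finset.sdiff_subset_sdiff hH.1 le_rfl
      · intro S hS
        simp only [Finset.mem_powerset] at hS
        show (S ∪ L) \ L = S
        rw [Finset.union_sdiff_right, Finset.sdiff_eq_self_of_disjoint]
        exact Finset.disjoint_of_subset_left hS Finset.sdiff_disjoint
      · intro H hH
        simp only [Finset.mem_filter, Finset.mem_powerset] at hH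
        show H \ L ∪ L = H
        rw [Finset.sdiff_union_self_eq_union, Finset.union_eq_left.2 hH.2]
      · intro S hS; rfl
    rw [← key]
    have hcard : ∀ S ∈ (F \ L).powerset, F.card - (S ∪ L).card = (F \ L).card - S.card := by
      intro S hS
      simp only [Finset.mem_powerset] at hS
      have hdisj : Disjoint S L := Finset.disjoint_of_subset_left hS Finset.sdiff_disjoint
      rw [Finset.card_union_of_disjoint hdisj, Finset.card_sdiff_of_subset hLF]
      omega
    rw [Finset.sum_congr rfl (fun S hS => by rw [hcard S hS]), sum_pm2]
    have : (F \ L = ∅) ↔ (F = L) := by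
      rw [Finset.sdiff_eq_empty_iff_subset]
      exact ⟨fun h => Finset.Subset.antisymm h hLF, fun h => h ▸ le_rfl⟩
    simp [this]
  · have h1 : F.powerset.filter (fun H => L ⊆ H) = ∅ := by
      rw [Finset.filter_eq_empty_iff]
      intro H hH hLH
      exact hLF (hLH.trans (Finset.mem_powerset.1 hH))
    rw [h1, Finset.sum_empty]
    have : F ≠ L := fun h => hLF (h ▸ le_rfl)
    simp [this]
lemma sup_mem_A {α : Type*} [DecidableEq α] {A : Finset (Finset α)} (hempty : ∅ ∈ A)
    (hunion : ∀ E ∈ A, ∀ F ∈ A, E ∪ F ∈ A) (T : Finset (Finset α)) (hT : ∀ x ∈ T, x ∈ A) :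
    T.sup id ∈ A := by
  induction T using Finset.induction_on with
  | empty => simpa using hempty
  | insert _ _ hx ih =>
    rename_i a s
    rw [Finset.sup_insert]
    exact hunion a (hT a (Finset.mem_insert_self a s)) _
      (ih (fun x hx => hT x (Finset.mem_insert_of_mem hx)))

lemma autPart_mem {α : Type*} [DecidableEq α] {A : Finset (Finset α)} (hempty : ∅ ∈ A)
    (hunion : ∀ E ∈ A, ∀ F ∈ A, E ∪ F ∈ A) (G : Finset α) : autPartA A G ∈ A := by
  exact sup_mem_A hempty hunion _ (fun x hx => (Finset.mem_filter.1 hx).2)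

lemma autPart_subset {α : Type*} [DecidableEq α] (A : Finset (Finset α)) (G : Finset α) :
    autPartA A G ⊆ G := by
  show autPartA A G ≤ G
  unfold autPartA
  refine Finset.sup_le (fun x hx => ?_)
  exact (Finset.mem_powerset.1 (Finset.mem_filter.1 hx).1 : id x ≤ G)

lemma subset_autPart {α : Type*} [DecidableEq α] {A : Finset (Finset α)} {L G : Finset α}
    (hL : L ∈ A) (hLG : L ⊆ G) : L ⊆ autPartA A G :=
  Finset.le_sup (f := id) (Finset.mem_filter.2 ⟨Finset.mem_powerset.2 hLG, hL⟩)

lemma exists_min {α : Type*} [DecidableEq α] {A : Finset (Finset α)} (E : Finset α) :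
    ∀ H ∈ A, E ⊆ H → ∃ L ∈ LamSet A E, L ⊆ H := by
  intro H
  induction H using Finset.strongInduction with
  | _ H ih =>
    intro hH hEH
    by_cases hmin : ∀ G ∈ A, E ⊆ G → G ⊆ H → G = H
    · exact ⟨H, Finset.mem_filter.2 ⟨hH, hEH, hmin⟩, le_rfl⟩
    · push_neg at hmin
      obtain ⟨G, hG, hEG, hGH, hne⟩ := hmin
      obtain ⟨L, hL, hLG⟩ := ih G (lt_of_le_of_ne hGH hne) hG hEG
      exact ⟨L, hL, hLG.trans hGH⟩

lemma key_iff {α : Type*} [DecidableEq α] {A : Finset (Finset α)} (hempty : ∅ ∈ A)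
    (hunion : ∀ E ∈ A, ∀ F ∈ A, E ∪ F ∈ A) (E G : Finset α) :
    E ⊆ autPartA A G ↔ ∃ L ∈ LamSet A E, L ⊆ G := by
  constructor
  · intro h
    obtain ⟨L, hL, hL2⟩ := exists_min E _ (autPart_mem hempty hunion G) h
    exact ⟨L, hL, hL2.trans (autPart_subset A G)⟩
  · rintro ⟨L, hL, hLG⟩
    have hLA : L ∈ A := (Finset.mem_filter.1 hL).1
    have hEL : E ⊆ L := (Finset.mem_filter.1 hL).2.1
    exact hEL.trans (subset_autPart hLA hLG)

lemma prod_unanim {α : Type*} [DecidableEq α] (T : Finset (Finset α)) (G : Finset α) :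
    ∏ L ∈ T, unanim L G = unanim (T.sup id) G := by
  unfold unanim
  by_cases h : T.sup id ⊆ G
  · rw [if_pos h]
    refine Finset.prod_eq_one fun L hL => ?_
    have : L ⊆ G := (Finset.le_sup (f := id) hL).trans h
    rw [if_pos this]
  · rw [if_neg h]
    rw [show (T.sup id ⊆ G) = (T.sup id ≤ G) from rfl, Finset.sup_le_iff] at h
    push_neg at h
    obtain ⟨L, hL, hLG⟩ := h
    exact Finset.prod_eq_zero hL (if_neg hLG)
lemma rep {α : Type*} [DecidableEq α] {A : Finset (Finset α)} (hempty : ∅ ∈ A)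
    (hunion : ∀ E ∈ A, ∀ F ∈ A, E ∪ F ∈ A) (E G : Finset α) :
    unanim E (autPartA A G)
      = ∑ T ∈ (LamSet A E).powerset.filter (fun T => T.Nonempty),
          (-1 : ℝ) ^ (T.card + 1) * unanim (T.sup id) G := by
  have hlhs : unanim E (autPartA A G) = 1 - ∏ L ∈ LamSet A E, (1 - unanim L G) := by
    unfold unanim
    by_cases h : E ⊆ autPartA A G
    · rw [if_pos h]
      obtain ⟨L, hL, hLG⟩ := (key_iff hempty hunion E G).1 h
      rw [Finset.prod_eq_zero hL (by rw [if_pos hLG]; ring)]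
      ring
    · rw [if_neg h]
      have hnone : ∀ L ∈ LamSet A E, ¬ L ⊆ G := fun L hL hLG =>
        h ((key_iff hempty hunion E G).2 ⟨L, hL, hLG⟩)
      rw [Finset.prod_eq_one fun L hL => by rw [if_neg (hnone L hL)]; ring]
      ring
  have hexp : ∏ L ∈ LamSet A E, (1 - unanim L G)
      = ∑ T ∈ (LamSet A E).powerset, (-1 : ℝ) ^ T.card * unanim (T.sup id) G := by
    have hpa := Finset.prod_add (fun L => -unanim L G) (fun _ => (1 : ℝ)) (LamSet A E)
    simp only [Finset.prod_const_one, mul_one] at hpa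
    calc ∏ L ∈ LamSet A E, (1 - unanim L G)
        = ∏ L ∈ LamSet A E, (-unanim L G + 1) := by
          refine Finset.prod_congr rfl fun L _ => by ring
      _ = ∑ T ∈ (LamSet A E).powerset, ∏ L ∈ T, -unanim L G := hpa
      _ = ∑ T ∈ (LamSet A E).powerset, (-1 : ℝ) ^ T.card * unanim (T.sup id) G := by
          refine Finset.sum_congr rfl fun T _ => ?_
          rw [← prod_unanim]
          rw [show (∏ L ∈ T, -unanim L G) = ∏ L ∈ T, (-1) * unanim L G by
            refine Finset.prod_congr rfl fun L _ => by ring]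
          rw [Finset.prod_mul_distrib, Finset.prod_const]
  have hsplit : ∑ T ∈ (LamSet A E).powerset, (-1 : ℝ) ^ T.card * unanim (T.sup id) G
      = 1 + ∑ T ∈ (LamSet A E).powerset.filter (fun T => T.Nonempty),
          (-1 : ℝ) ^ T.card * unanim (T.sup id) G := by
    rw [← Finset.sum_filter_add_sum_filter_not ((LamSet A E).powerset)
      (fun T => T = ∅) (fun T => (-1 : ℝ) ^ T.card * unanim (T.sup id) G)]
    have h1 : (LamSet A E).powerset.filter (fun T => T = ∅) = {∅} := by
      rw [Finset.filter_eq']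
      simp
    have h2 : (LamSet A E).powerset.filter (fun T => ¬ T = ∅)
        = (LamSet A E).powerset.filter (fun T => T.Nonempty) := by
      refine Finset.filter_congr fun T _ => ?_
      simp [Finset.nonempty_iff_ne_empty]
    rw [h1, h2, Finset.sum_singleton]
    simp [unanim]
  rw [hlhs, hexp, hsplit]
  have : ∑ T ∈ (LamSet A E).powerset.filter (fun T => T.Nonempty),
      (-1 : ℝ) ^ (T.card + 1) * unanim (T.sup id) G
      = -∑ T ∈ (LamSet A E).powerset.filter (fun T => T.Nonempty),
          (-1 : ℝ) ^ T.card * unanim (T.sup id) G := by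
    rw [← Finset.sum_neg_distrib]
    refine Finset.sum_congr rfl fun T _ => by ring
  rw [this]
  ring

theorem stmt17 {α : Type*} [Fintype α] [DecidableEq α]
    (A : Finset (Finset α)) (hempty : ∅ ∈ A) (huniv : univ ∈ A)
    (hunion : ∀ E ∈ A, ∀ F ∈ A, E ∪ F ∈ A)
    (E : Finset α) (hE : E ≠ ∅) :
    (∀ F : Finset α, ¬ LamStar A E F →
      dividend (fun G => unanim E (autPartA A G)) F = 0) ∧
    (∀ G : Finset α,
      unanim E (autPartA A G)
        = ∑ F ∈ (univ : Finset α).powerset.filter (LamStar A E),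
            dividend (fun G' => unanim E (autPartA A G')) F * unanim F G) := by
  set NE := (LamSet A E).powerset.filter (fun T => T.Nonempty) with hNE
  have hrep : ∀ G, unanim E (autPartA A G)
      = ∑ T ∈ NE, (-1 : ℝ) ^ (T.card + 1) * unanim (T.sup id) G :=
    fun G => rep hempty hunion E G
  have hdiv : ∀ F, dividend (fun G => unanim E (autPartA A G)) F
      = ∑ T ∈ NE, (-1 : ℝ) ^ (T.card + 1) * (if F = T.sup id then 1 else 0) := by
    intro F
    unfold dividend
    calc ∑ H ∈ F.powerset, (-1 : ℝ) ^ (F.card - H.card) * unanim E (autPartA A H)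
        = ∑ H ∈ F.powerset, ∑ T ∈ NE,
            (-1 : ℝ) ^ (F.card - H.card) * ((-1 : ℝ) ^ (T.card + 1) * unanim (T.sup id) H) := by
          refine Finset.sum_congr rfl fun H _ => ?_
          rw [hrep H, Finset.mul_sum]
      _ = ∑ T ∈ NE, ∑ H ∈ F.powerset,
            (-1 : ℝ) ^ (F.card - H.card) * ((-1 : ℝ) ^ (T.card + 1) * unanim (T.sup id) H) :=
          Finset.sum_comm
      _ = ∑ T ∈ NE, (-1 : ℝ) ^ (T.card + 1) * dividend (unanim (T.sup id)) F := by
          refine Finset.sum_congr rfl fun T _ => ?_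
          unfold dividend
          rw [Finset.mul_sum]
          exact Finset.sum_congr rfl fun H _ => by ring
      _ = _ := Finset.sum_congr rfl fun T _ => by rw [dividend_unanim]
  have hstar : ∀ T ∈ NE, LamStar A E (T.sup id) := by
    intro T hT
    rw [hNE, Finset.mem_filter, Finset.mem_powerset] at hT
    exact ⟨T, hT.1, hT.2, rfl⟩
  constructor
  · intro F hF
    rw [hdiv F]
    refine Finset.sum_eq_zero fun T hT => ?_
    have hne : F ≠ T.sup id := by
      intro h
      exact hF (h ▸ hstar T hT)
    rw [if_neg hne, mul_zero]
  · intro G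
    have hmain : ∑ F ∈ (univ : Finset α).powerset.filter (LamStar A E),
        dividend (fun G' => unanim E (autPartA A G')) F * unanim F G
        = ∑ T ∈ NE, (-1 : ℝ) ^ (T.card + 1) * unanim (T.sup id) G := by
      calc ∑ F ∈ (univ : Finset α).powerset.filter (LamStar A E),
          dividend (fun G' => unanim E (autPartA A G')) F * unanim F G
          = ∑ F ∈ (univ : Finset α).powerset.filter (LamStar A E), ∑ T ∈ NE,
              ((-1 : ℝ) ^ (T.card + 1) * (if F = T.sup id then 1 else 0)) * unanim F G := by
            refine Finset.sum_congr rfl fun F _ => ?_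
            rw [hdiv F, Finset.sum_mul]
        _ = ∑ T ∈ NE, ∑ F ∈ (univ : Finset α).powerset.filter (LamStar A E),
              ((-1 : ℝ) ^ (T.card + 1) * (if F = T.sup id then 1 else 0)) * unanim F G :=
            Finset.sum_comm
        _ = ∑ T ∈ NE, (-1 : ℝ) ^ (T.card + 1) * unanim (T.sup id) G := by
            refine Finset.sum_congr rfl fun T hT => ?_
            rw [Finset.sum_eq_single (T.sup id)]
            · rw [if_pos rfl, mul_one]
            · intro F _ hne
              rw [if_neg hne, mul_zero, zero_mul]
            · intro habs
              exact absurd (Finset.mem_filter.2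
                ⟨Finset.mem_powerset.2 (Finset.subset_univ _), hstar T hT⟩) habs
    rw [hmain, hrep G]
end
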